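/- Let (A_m)_{m∈ℤ} admit a partial exponential dichotomy and let B be an admissible Banach sequence space. Then the formula (𝔸 y)_n = ∑_{m ≤ n} 𝒜(n,m)P_m^1 y_m − ∑_{m > n} 𝒜(n,m)P_m^2 y_m defines a bounded linear operator 𝔸 : X_B^{s,u} → X_B^{s,u}, and for x, y ∈ X_B^{s,u} one has 𝔸y = x if and only if x_n − A_{n−1}x_{n−1} = y_n for all n ∈ ℤ. -/

import Mathlib

/-- A Banach sequence space over ℤ: a linear subspace of all real sequences indexed
by ℤ, equipped with a complete norm which is solid. -/
structure BanachSeqSpace where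
  /-- membership in the subspace -/
  mem : (ℤ → ℝ) → Prop
  /-- the norm -/
  N : (ℤ → ℝ) → ℝ
  zero_mem : mem 0
  add_mem : ∀ s t, mem s → mem t → mem (s + t)
  smul_mem : ∀ (a : ℝ) (s), mem s → mem (a • s)
  N_nonneg : ∀ s, 0 ≤ N s
  N_zero : N 0 = 0
  N_eq_zero : ∀ s, mem s → N s = 0 → s = 0
  N_add : ∀ s t, mem s → mem t → N (s + t) ≤ N s + N t
  N_smul : ∀ (a : ℝ) (s), mem s → N (a • s) = |a| * N s
  /-- solidity: if |s n| ≤ |t n| for all n and t belongs to the space,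
  then so does s, with N s ≤ N t -/
  solid : ∀ s t, mem t → (∀ n : ℤ, |s n| ≤ |t n|) → mem s ∧ N s ≤ N t
  /-- completeness: every Cauchy sequence in the space converges in the space -/
  complete : ∀ u : ℕ → (ℤ → ℝ), (∀ k, mem (u k)) →
    (∀ ε > (0 : ℝ), ∃ K : ℕ, ∀ j ≥ K, ∀ k ≥ K, N (u j - u k) ≤ ε) →
    ∃ v, mem v ∧ ∀ ε > (0 : ℝ), ∃ K : ℕ, ∀ k ≥ K, N (u k - v) ≤ ε

/-- An admissible Banach sequence space: additionally contains all singleton indicator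
sequences with positive norm and is invariant under shifts, which act isometrically. -/
structure AdmissibleBSS extends BanachSeqSpace where
  indicator_mem : ∀ n : ℤ, mem (fun k => if k = n then (1 : ℝ) else 0)
  indicator_pos : ∀ n : ℤ, 0 < N (fun k => if k = n then (1 : ℝ) else 0)
  shift_mem : ∀ (s : ℤ → ℝ) (m : ℤ), mem s → mem (fun n => s (n + m))
  shift_isometry : ∀ (s : ℤ → ℝ) (m : ℤ), mem s → N (fun n => s (n + m)) = N s

variable {X : Type*} [NormedAddCommGroup X] [NormedSpace ℝ X]

/-- The forward cocycle: `fcoc A n k = A (n+k-1) ∘ ⋯ ∘ A n`, so that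
`fcoc A n k = 𝒜(n+k, n)`. -/
def fcoc (A : ℤ → X →L[ℝ] X) (n : ℤ) : ℕ → (X →L[ℝ] X)
  | 0 => ContinuousLinearMap.id ℝ X
  | (k + 1) => (A (n + k)).comp (fcoc A n k)

/-- A partial exponential dichotomy for a sequence `(A_m)_{m ∈ ℤ}` of bounded linear
operators: projections `P¹, P², P³` summing to the identity and commuting with the
dynamics, with the dynamics invertible along the unstable direction (witnessed by the
backward cocycle `V m n = 𝒜(m,n)P_n²` for `m ≤ n`), and exponential bounds. -/
structure PartialDichotomy (A : ℤ → X →L[ℝ] X) where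
  P1 : ℤ → X →L[ℝ] X
  P2 : ℤ → X →L[ℝ] X
  P3 : ℤ → X →L[ℝ] X
  D : ℝ
  b : ℝ
  d : ℝ
  hD : 0 < D
  hb : 0 < b
  hd : 0 < d
  proj1 : ∀ n, (P1 n).comp (P1 n) = P1 n
  proj2 : ∀ n, (P2 n).comp (P2 n) = P2 n
  proj3 : ∀ n, (P3 n).comp (P3 n) = P3 n
  sum_eq : ∀ n (x : X), P1 n x + P2 n x + P3 n x = x
  comm1 : ∀ n, (A n).comp (P1 n) = (P1 (n + 1)).comp (A n)
  comm2 : ∀ n, (A n).comp (P2 n) = (P2 (n + 1)).comp (A n)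
  comm3 : ∀ n, (A n).comp (P3 n) = (P3 (n + 1)).comp (A n)
  /-- the backward cocycle along the unstable direction, `V m n = 𝒜(m,n)P_n²` for `m ≤ n` -/
  V : ℤ → ℤ → X →L[ℝ] X
  V_self : ∀ n, V n n = P2 n
  V_proj : ∀ m n, m ≤ n → (V m n).comp (P2 n) = V m n
  V_range : ∀ m n, m ≤ n → (P2 m).comp (V m n) = V m n
  /-- `𝒜(n,m) ∘ 𝒜(m,n)P_n² = P_n²`: `V m n` inverts the forward dynamics -/
  V_right_inv : ∀ m n, m ≤ n → (fcoc A m (n - m).toNat).comp (V m n) = P2 n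
  /-- `𝒜(m,n) ∘ 𝒜(n,m)P_m² = P_m²` -/
  V_left_inv : ∀ m n, m ≤ n → (V m n).comp ((fcoc A m (n - m).toNat).comp (P2 m)) = P2 m
  /-- `‖𝒜(m,n)P_n¹‖ ≤ D e^{-d(m-n)}` for `m ≥ n` -/
  bound1 : ∀ (n : ℤ) (k : ℕ), ‖(fcoc A n k).comp (P1 n)‖ ≤ D * Real.exp (-d * k)
  /-- `‖𝒜(m,n)P_n²‖ ≤ D e^{-b(n-m)}` for `m ≤ n` -/
  bound2 : ∀ m n, m ≤ n → ‖V m n‖ ≤ D * Real.exp (-b * (n - m))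

/-- Membership in `X_B`: the sequence of norms belongs to `B`. -/
def memXB (B : BanachSeqSpace) (x : ℤ → X) : Prop := B.mem (fun n => ‖x n‖)

/-- The norm on `X_B`. -/
def NXB (B : BanachSeqSpace) (x : ℤ → X) : ℝ := B.N (fun n => ‖x n‖)

/-- Membership in the stable-unstable subspace `X_B^{s,u}`:
`x ∈ X_B` and `x_n ∈ Im P_n¹ ⊕ Im P_n²` for all `n`. -/
def memXBsu (B : BanachSeqSpace) {A : ℤ → X →L[ℝ] X} (pd : PartialDichotomy A)
    (x : ℤ → X) : Prop :=
  memXB B x ∧ ∀ n : ℤ, x n = pd.P1 n (x n) + pd.P2 n (x n)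


/-! ### Auxiliary lemmas -/

set_option linter.unusedSectionVars false

namespace GreenAux

open Finset

lemma bss_mem_neg (B : BanachSeqSpace) {s : ℤ → ℝ} (hs : B.mem s) : B.mem (-s) := by
  have := B.smul_mem (-1) s hs
  simpa using this

lemma bss_mem_sub (B : BanachSeqSpace) {s t : ℤ → ℝ} (hs : B.mem s) (ht : B.mem t) :
    B.mem (s - t) := by
  have := B.add_mem s (-t) hs (bss_mem_neg B ht)
  simpa [sub_eq_add_neg] using this

lemma bss_N_neg (B : BanachSeqSpace) {s : ℤ → ℝ} (hs : B.mem s) : B.N (-s) = B.N s := by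
  have := B.N_smul (-1) s hs
  simpa using this

lemma bss_N_sub_comm (B : BanachSeqSpace) {s t : ℤ → ℝ} (hs : B.mem s) (ht : B.mem t) :
    B.N (s - t) = B.N (t - s) := by
  have := bss_N_neg B (bss_mem_sub B hs ht)
  simpa [neg_sub] using this.symm

/-- pointwise evaluation is controlled by the norm -/
lemma bss_abs_le (B : AdmissibleBSS) {s : ℤ → ℝ} (hs : B.mem s) (n : ℤ) :
    |s n| * B.N (fun k => if k = (0:ℤ) then (1:ℝ) else 0) ≤ B.N s := by
  have hind := B.indicator_mem n
  have hmem : B.mem (s n • (fun k => if k = n then (1:ℝ) else 0)) := B.smul_mem _ _ hind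
  have hNsmul := B.N_smul (s n) _ hind
  have hpt : ∀ k : ℤ, |(s n • (fun k => if k = n then (1:ℝ) else 0)) k| ≤ |s k| := by
    intro k
    by_cases h : k = n <;> simp [h, Pi.smul_apply, smul_eq_mul]
  have hsolid := (B.solid _ s hs hpt).2
  have hshift := B.shift_isometry (fun k => if k = n then (1:ℝ) else 0) n hind
  have heq : (fun k : ℤ => if k + n = n then (1:ℝ) else 0)
      = (fun k : ℤ => if k = (0:ℤ) then (1:ℝ) else 0) := by
    funext k
    simp [add_eq_right]
  rw [heq] at hshift
  calc |s n| * B.N (fun k => if k = (0:ℤ) then (1:ℝ) else 0)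
      = |s n| * B.N (fun k => if k = n then (1:ℝ) else 0) := by rw [hshift]
    _ = B.N (s n • (fun k => if k = n then (1:ℝ) else 0)) := (hNsmul).symm
    _ ≤ B.N s := hsolid

lemma bss_abs_le' (B : AdmissibleBSS) {s : ℤ → ℝ} (hs : B.mem s) (n : ℤ) :
    |s n| ≤ B.N s / B.N (fun k => if k = (0:ℤ) then (1:ℝ) else 0) := by
  rw [le_div_iff₀ (B.indicator_pos 0)]
  exact bss_abs_le B hs n

lemma bss_finsum (B : BanachSeqSpace) (g : ℕ → ℤ → ℝ) (hg : ∀ k, B.mem (g k))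
    (L : Finset ℕ) :
    B.mem (fun n => ∑ k ∈ L, g k n) ∧ B.N (fun n => ∑ k ∈ L, g k n) ≤ ∑ k ∈ L, B.N (g k) := by
  classical
  induction L using Finset.induction with
  | empty =>
    constructor
    · exact B.zero_mem
    · simp only [Finset.sum_empty]
      exact le_of_eq B.N_zero
  | @insert a L ha ih =>
    have heq : (fun n => ∑ k ∈ insert a L, g k n) = g a + (fun n => ∑ k ∈ L, g k n) := by
      funext n
      simp [Finset.sum_insert ha]
    rw [heq, Finset.sum_insert ha]
    refine ⟨B.add_mem _ _ (hg a) ih.1, ?_⟩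
    calc B.N (g a + fun n => ∑ k ∈ L, g k n) ≤ B.N (g a) + B.N (fun n => ∑ k ∈ L, g k n) :=
          B.N_add _ _ (hg a) ih.1
      _ ≤ B.N (g a) + ∑ k ∈ L, B.N (g k) := by linarith [ih.2]


variable {X : Type*} [NormedAddCommGroup X] [NormedSpace ℝ X]

lemma fcoc_succ_left (A : ℤ → X →L[ℝ] X) (n : ℤ) (k : ℕ) :
    fcoc A n (k+1) = (fcoc A (n+1) k).comp (A n) := by
  induction k with
  | zero => simp [fcoc]
  | succ k ih =>
    show (A (n + (k+1:ℕ))).comp (fcoc A n (k+1)) = (A (n+1+k)).comp ((fcoc A (n+1) k).comp (A n))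
    rw [ih]
    congr 2
    push_cast
    ring

lemma fcoc_comm1 (A : ℤ → X →L[ℝ] X) (pd : PartialDichotomy A) (n : ℤ) (k : ℕ) :
    (fcoc A n k).comp (pd.P1 n) = (pd.P1 (n + k)).comp (fcoc A n k) := by
  induction k with
  | zero => simp [fcoc]
  | succ k ih =>
    show ((A (n + k)).comp (fcoc A n k)).comp (pd.P1 n) = _
    rw [ContinuousLinearMap.comp_assoc, ih, ← ContinuousLinearMap.comp_assoc,
      pd.comm1 (n + k), ContinuousLinearMap.comp_assoc]
    congr 1
    push_cast
    ring

lemma fcoc_comm2 (A : ℤ → X →L[ℝ] X) (pd : PartialDichotomy A) (n : ℤ) (k : ℕ) :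
    (fcoc A n k).comp (pd.P2 n) = (pd.P2 (n + k)).comp (fcoc A n k) := by
  induction k with
  | zero => simp [fcoc]
  | succ k ih =>
    show ((A (n + k)).comp (fcoc A n k)).comp (pd.P2 n) = _
    rw [ContinuousLinearMap.comp_assoc, ih, ← ContinuousLinearMap.comp_assoc,
      pd.comm2 (n + k), ContinuousLinearMap.comp_assoc]
    congr 1
    push_cast
    ring

/-- orthogonality of the projections `P¹` and `P²` -/
lemma proj_orth (A : ℤ → X →L[ℝ] X) (pd : PartialDichotomy A) (n : ℤ) (x : X) :
    pd.P1 n (pd.P2 n x) = 0 ∧ pd.P2 n (pd.P1 n x) = 0 := by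
  have e2 : ∀ z, pd.P1 n (pd.P1 n z) = pd.P1 n z := fun z => by
    have := DFunLike.congr_fun (pd.proj1 n) z
    simpa using this
  have f2 : ∀ z, pd.P2 n (pd.P2 n z) = pd.P2 n z := fun z => by
    have := DFunLike.congr_fun (pd.proj2 n) z
    simpa using this
  have g2 : ∀ z, pd.P3 n (pd.P3 n z) = pd.P3 n z := fun z => by
    have := DFunLike.congr_fun (pd.proj3 n) z
    simpa using this
  have g_eq : ∀ z, pd.P3 n z = z - pd.P1 n z - pd.P2 n z := fun z => by
    have h := pd.sum_eq n z
    linear_combination (norm := module) h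
  -- key identity: e(f z) + f(e z) = 0
  have hef : ∀ z, pd.P1 n (pd.P2 n z) + pd.P2 n (pd.P1 n z) = 0 := by
    intro z
    have h := g2 z
    rw [g_eq z, g_eq (z - pd.P1 n z - pd.P2 n z)] at h
    simp only [map_sub] at h
    rw [e2, f2] at h
    linear_combination (norm := module) h
  have h1 := hef (pd.P1 n x)
  rw [e2 x] at h1
  have h2 := congrArg (pd.P1 n) (hef x)
  simp only [map_add, map_zero] at h2
  rw [e2 (pd.P2 n x)] at h2
  have h3 := hef x
  have h4 : pd.P2 n (pd.P1 n x) + pd.P2 n (pd.P1 n x) = 0 := by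
    linear_combination (norm := module) h1 - h2 + h3
  have hfe : pd.P2 n (pd.P1 n x) = 0 := by
    have h5 : (2:ℝ) • pd.P2 n (pd.P1 n x) = 0 := by rw [two_smul]; exact h4
    simpa using (smul_eq_zero.mp h5).resolve_left (by norm_num)
  have hef' : pd.P1 n (pd.P2 n x) = 0 := by
    have := h3
    rw [hfe, add_zero] at this
    exact this
  exact ⟨hef', hfe⟩


/-- `A (n-1) ∘ V (n-1) m = V n m` for `n ≤ m`. -/
lemma V_shift (A : ℤ → X →L[ℝ] X) (pd : PartialDichotomy A) (n m : ℤ) (h : n ≤ m) (x : X) :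
    A (n-1) (pd.V (n-1) m x) = pd.V n m x := by
  set k : ℕ := (m - n).toNat with hk
  have hk1 : (m - (n-1)).toNat = k + 1 := by omega
  have hA : fcoc A (n-1) (k+1) = (fcoc A n k).comp (A (n-1)) := by
    have := fcoc_succ_left A (n-1) k
    rwa [sub_add_cancel] at this
  -- step 1
  have step1 : fcoc A n k (A (n-1) (pd.V (n-1) m x)) = pd.P2 m x := by
    have hri := pd.V_right_inv (n-1) m (by omega)
    rw [hk1, hA] at hri
    have := DFunLike.congr_fun hri x
    simpa using this
  -- step 2 : the vector lies in the range of P2 n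
  set w := A (n-1) (pd.V (n-1) m x) with hw
  have step2 : pd.P2 n w = w := by
    have hcomm := pd.comm2 (n-1)
    rw [sub_add_cancel] at hcomm
    have hrange := pd.V_range (n-1) m (by omega)
    have h1 : pd.V (n-1) m x = pd.P2 (n-1) (pd.V (n-1) m x) := by
      have := DFunLike.congr_fun hrange x
      simpa using this.symm
    have : w = pd.P2 n w := by
      calc w = A (n-1) (pd.P2 (n-1) (pd.V (n-1) m x)) := by rw [hw, ← h1]
        _ = ((A (n-1)).comp (pd.P2 (n-1))) (pd.V (n-1) m x) := rfl
        _ = ((pd.P2 n).comp (A (n-1))) (pd.V (n-1) m x) := by rw [hcomm]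
        _ = pd.P2 n w := rfl
    exact this.symm
  -- step 3 : conclude using the left inverse
  have hli := pd.V_left_inv n m h
  have hli' : ∀ z, pd.V n m (fcoc A n k (pd.P2 n z)) = pd.P2 n z := by
    intro z
    have : (m - n).toNat = k := hk.symm
    have h0 := DFunLike.congr_fun hli z
    rw [this] at h0
    simpa using h0
  have hproj := pd.V_proj n m h
  have hproj' : pd.V n m (pd.P2 m x) = pd.V n m x := by
    have := DFunLike.congr_fun hproj x
    simpa using this
  calc A (n-1) (pd.V (n-1) m x) = w := rfl
    _ = pd.P2 n w := step2.symm
    _ = pd.V n m (fcoc A n k (pd.P2 n w)) := (hli' w).symm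
    _ = pd.V n m (fcoc A n k w) := by rw [step2]
    _ = pd.V n m (pd.P2 m x) := by rw [step1]
    _ = pd.V n m x := hproj'



lemma summable_exp_decay {d : ℝ} (hd : 0 < d) : Summable (fun k : ℕ => Real.exp (-d * k)) := by
  have := Real.summable_exp_nat_mul_iff.mpr (show -d < 0 by linarith)
  apply this.congr
  intro k
  rw [mul_comm]

lemma sol_cocycle (A : ℤ → X →L[ℝ] X) (w : ℤ → X)
    (hrec : ∀ j : ℤ, w j = A (j-1) (w (j-1))) (m : ℤ) (k : ℕ) :
    fcoc A m k (w m) = w (m + k) := by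
  induction k with
  | zero => simp [fcoc]
  | succ k ih =>
    have : fcoc A m (k+1) (w m) = A (m + k) (fcoc A m k (w m)) := rfl
    rw [this, ih]
    have h := hrec (m + k + 1)
    have harg : (m + (k:ℤ) + 1) - 1 = m + k := by ring
    rw [harg] at h
    rw [← h]
    congr 1
    push_cast
    ring

/-- a bounded solution of the homogeneous equation lying in `Im P¹ ⊕ Im P²` vanishes -/
lemma sol_zero (A : ℤ → X →L[ℝ] X) (pd : PartialDichotomy A) (w : ℤ → X) (M : ℝ)
    (hM : ∀ j, ‖w j‖ ≤ M) (hrec : ∀ j : ℤ, w j = A (j-1) (w (j-1)))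
    (hsplit : ∀ j : ℤ, w j = pd.P1 j (w j) + pd.P2 j (w j)) : ∀ n : ℤ, w n = 0 := by
  have hM0 : 0 ≤ M := le_trans (norm_nonneg (w 0)) (hM 0)
  -- P1 component vanishes
  have hP1 : ∀ n : ℤ, pd.P1 n (w n) = 0 := by
    intro n
    have hbd : ∀ k : ℕ, ‖pd.P1 n (w n)‖ ≤ pd.D * Real.exp (-pd.d * k) * M := by
      intro k
      set m : ℤ := n - k with hm
      have hmk : m + (k:ℤ) = n := by omega
      have h1 : pd.P1 n (w n) = ((fcoc A m k).comp (pd.P1 m)) (w m) := by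
        have hc := DFunLike.congr_fun (fcoc_comm1 A pd m k) (w m)
        simp only [ContinuousLinearMap.comp_apply] at hc ⊢
        rw [hc, sol_cocycle A w hrec m k, hmk]
      rw [h1]
      calc ‖((fcoc A m k).comp (pd.P1 m)) (w m)‖
          ≤ ‖(fcoc A m k).comp (pd.P1 m)‖ * ‖w m‖ := ContinuousLinearMap.le_opNorm _ _
        _ ≤ (pd.D * Real.exp (-pd.d * k)) * M := by
            exact mul_le_mul (pd.bound1 m k) (hM m) (norm_nonneg _)
              (mul_nonneg pd.hD.le (Real.exp_pos _).le)
    have htend : Filter.Tendsto (fun k : ℕ => pd.D * Real.exp (-pd.d * k) * M)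
        Filter.atTop (nhds 0) := by
      have h0 := (summable_exp_decay pd.hd).tendsto_atTop_zero
      have := (h0.const_mul pd.D).mul_const M
      simpa using this
    have : ‖pd.P1 n (w n)‖ ≤ 0 := ge_of_tendsto' htend hbd
    have : ‖pd.P1 n (w n)‖ = 0 := le_antisymm this (norm_nonneg _)
    exact norm_eq_zero.mp this
  -- P2 component vanishes
  have hP2 : ∀ n : ℤ, pd.P2 n (w n) = 0 := by
    intro n
    have hrep : ∀ k : ℕ, pd.P2 n (w n) = pd.V n (n + k) (pd.P2 (n + k) (w (n + k))) := by
      intro k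
      have hle : n ≤ n + (k:ℤ) := by omega
      have htn : ((n + (k:ℤ)) - n).toNat = k := by omega
      have hrep : pd.P2 n (w n) = pd.V n (n + k) (pd.P2 (n + k) (w (n + k))) := by
        have hli := DFunLike.congr_fun (pd.V_left_inv n (n + k) hle) (w n)
        rw [htn] at hli
        simp only [ContinuousLinearMap.comp_apply] at hli
        have hc := DFunLike.congr_fun (fcoc_comm2 A pd n k) (w n)
        simp only [ContinuousLinearMap.comp_apply] at hc
        rw [hc, sol_cocycle A w hrec n k] at hli
        exact hli.symm
      exact hrep
    have hbd : ∀ k : ℕ, ‖pd.V n (n + k) (pd.P2 (n + k) (w (n + k)))‖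
        ≤ pd.D * Real.exp (-pd.b * k) * (pd.D * M) := by
      intro k
      have hle : n ≤ n + (k:ℤ) := by omega
      have hb2 := pd.bound2 n (n + k) hle
      have hb2' : ‖pd.V n (n + k)‖ ≤ pd.D * Real.exp (-pd.b * k) := by
        have hcast : ((n + (k:ℤ) : ℤ) : ℝ) - (n:ℝ) = (k : ℝ) := by push_cast; ring
        rwa [hcast] at hb2
      have hPnorm : ‖pd.P2 (n + k) (w (n + k))‖ ≤ pd.D * M := by
        have h2 := pd.bound2 (n + k) (n + k) le_rfl
        rw [pd.V_self] at h2
        simp only [sub_self, mul_zero, Real.exp_zero, mul_one] at h2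
        calc ‖pd.P2 (n + k) (w (n + k))‖ ≤ ‖pd.P2 (n + k)‖ * ‖w (n + k)‖ :=
              ContinuousLinearMap.le_opNorm _ _
          _ ≤ pd.D * M := mul_le_mul h2 (hM _) (norm_nonneg _) pd.hD.le
      calc ‖pd.V n (n + k) (pd.P2 (n + k) (w (n + k)))‖
          ≤ ‖pd.V n (n + k)‖ * ‖pd.P2 (n + k) (w (n + k))‖ := ContinuousLinearMap.le_opNorm _ _
        _ ≤ pd.D * Real.exp (-pd.b * k) * (pd.D * M) :=
            mul_le_mul hb2' hPnorm (norm_nonneg _) (mul_nonneg pd.hD.le (Real.exp_pos _).le)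
    have htend : Filter.Tendsto (fun k : ℕ => pd.D * Real.exp (-pd.b * k) * (pd.D * M))
        Filter.atTop (nhds 0) := by
      have h0 := (summable_exp_decay pd.hb).tendsto_atTop_zero
      have := (h0.const_mul pd.D).mul_const (pd.D * M)
      simpa using this
    have h0 : ‖pd.P2 n (w n)‖ ≤ 0 := by
      apply ge_of_tendsto' htend
      intro k
      rw [hrep k]
      exact hbd k
    exact norm_eq_zero.mp (le_antisymm h0 (norm_nonneg _))
  intro n
  rw [hsplit n, hP1 n, hP2 n, add_zero]



open Filter in
/-- convolution with a summable nonnegative kernel maps `B` to `B` -/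
lemma conv_mem (B : AdmissibleBSS) (r : ℕ → ℝ) (hr0 : ∀ k, 0 ≤ r k) (hrs : Summable r)
    (f : ℕ → ℤ) (s : ℤ → ℝ) (hs : B.mem s) (hs0 : ∀ n, 0 ≤ s n) :
    B.mem (fun n => ∑' k, r k * s (n + f k)) ∧
      B.N (fun n => ∑' k, r k * s (n + f k)) ≤ (∑' k, r k) * B.N s := by
  set c := B.N (fun k => if k = (0:ℤ) then (1:ℝ) else 0) with hc
  have hcpos : 0 < c := B.indicator_pos 0
  set M := B.N s / c with hMdef
  have hM : ∀ n, s n ≤ M := fun n => le_trans (le_abs_self _) (bss_abs_le' B hs n)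
  have hsumm : ∀ n, Summable (fun k => r k * s (n + f k)) := by
    intro n
    exact Summable.of_nonneg_of_le (fun k => mul_nonneg (hr0 k) (hs0 _))
      (fun k => mul_le_mul_of_nonneg_left (hM _) (hr0 k)) (hrs.mul_right M)
  set g : ℕ → ℤ → ℝ := fun k n => r k * s (n + f k) with hg
  have hgmem : ∀ k, B.mem (g k) := by
    intro k
    have h1 := B.shift_mem s (f k) hs
    have h2 := B.smul_mem (r k) _ h1
    have : g k = r k • fun n => s (n + f k) := by
      funext n; simp [hg, smul_eq_mul]
    rw [this]; exact h2
  have hgN : ∀ k, B.N (g k) = r k * B.N s := by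
    intro k
    have h1 := B.shift_mem s (f k) hs
    have h2 := B.N_smul (r k) _ h1
    have h3 := B.shift_isometry s (f k) hs
    calc B.N (g k) = B.N (r k • fun n => s (n + f k)) := rfl
      _ = |r k| * B.N (fun n => s (n + f k)) := h2
      _ = r k * B.N s := by rw [abs_of_nonneg (hr0 k), h3]
  set u : ℕ → ℤ → ℝ := fun K n => ∑ k ∈ Finset.range K, g k n with hu
  have humem : ∀ K, B.mem (u K) := fun K => (bss_finsum B.toBanachSeqSpace g hgmem _).1
  set R : ℕ → ℝ := fun K => ∑ k ∈ Finset.range K, r k with hR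
  have hdiff : ∀ j k : ℕ, j ≤ k → u k - u j = fun n => ∑ i ∈ Finset.Ico j k, g i n := by
    intro j k hjk
    funext n
    simp only [hu, Pi.sub_apply]
    rw [Finset.sum_Ico_eq_sub _ hjk]
  have hNdiff : ∀ j k : ℕ, j ≤ k → B.N (u k - u j) ≤ (R k - R j) * B.N s := by
    intro j k hjk
    rw [hdiff j k hjk]
    refine le_trans (bss_finsum B.toBanachSeqSpace g hgmem _).2 ?_
    have : ∑ i ∈ Finset.Ico j k, B.N (g i) = (∑ i ∈ Finset.Ico j k, r i) * B.N s := by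
      rw [Finset.sum_mul]
      exact Finset.sum_congr rfl (fun i _ => hgN i)
    rw [this, Finset.sum_Ico_eq_sub _ hjk]
  have hcauchy : ∀ ε > (0:ℝ), ∃ K : ℕ, ∀ j ≥ K, ∀ k ≥ K, B.N (u j - u k) ≤ ε := by
    intro ε hε
    have hεs : (0:ℝ) < ε / (2 * (B.N s + 1)) := by
      apply div_pos hε
      have := B.N_nonneg s
      linarith
    have hRc : CauchySeq R := hrs.hasSum.tendsto_sum_nat.cauchySeq
    obtain ⟨K, hK⟩ := Metric.cauchySeq_iff'.mp hRc (ε / (2 * (B.N s + 1))) hεs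
    refine ⟨K, fun j hj k hk => ?_⟩
    have key : ∀ j' k' : ℕ, K ≤ j' → K ≤ k' → j' ≤ k' → B.N (u k' - u j') ≤ ε := by
      intro j' k' hj' hk' hjk
      refine le_trans (hNdiff j' k' hjk) ?_
      have h1 : R k' - R j' ≤ ε / (B.N s + 1) := by
        have ha := hK k' hk'
        have hb := hK j' hj'
        have hmono : R j' ≤ R k' := by
          apply Finset.sum_le_sum_of_subset_of_nonneg (Finset.range_subset_range.mpr hjk)
          intro i _ _; exact hr0 i
        rw [Real.dist_eq] at ha hb
        have hdd : ε / (2 * (B.N s + 1)) + ε / (2 * (B.N s + 1)) = ε / (B.N s + 1) := by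
          rw [← add_div, show ε + ε = 2 * ε by ring,
            mul_div_mul_left ε (B.N s + 1) (two_ne_zero)]
        cases abs_lt.mp ha with
        | intro h1 h2 =>
          cases abs_lt.mp hb with
          | intro h3 h4 => linarith
      have h2 : (R k' - R j') * B.N s ≤ (ε / (B.N s + 1)) * B.N s :=
        mul_le_mul_of_nonneg_right h1 (B.N_nonneg s)
      refine le_trans h2 ?_
      rw [div_mul_eq_mul_div, div_le_iff₀ (by have := B.N_nonneg s; linarith)]
      have := B.N_nonneg s
      nlinarith
    rcases le_total j k with h | h
    · have := key j k hj hk h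
      rwa [bss_N_sub_comm B.toBanachSeqSpace (humem j) (humem k)]
    · exact key k j hk hj h
  obtain ⟨v, hvmem, hvconv⟩ := B.complete u humem hcauchy
  have hvw : v = fun n => ∑' k, r k * s (n + f k) := by
    funext n
    have h1 : Tendsto (fun K => u K n) atTop (nhds (∑' k, r k * s (n + f k))) := by
      exact (hsumm n).hasSum.tendsto_sum_nat
    have h2 : Tendsto (fun K => u K n) atTop (nhds (v n)) := by
      rw [Metric.tendsto_atTop]
      intro ε hε
      obtain ⟨K, hK⟩ := hvconv (ε * c / 2) (by positivity)
      refine ⟨K, fun k hk => ?_⟩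
      have hmemdiff : B.mem (u k - v) := bss_mem_sub B.toBanachSeqSpace (humem k) hvmem
      have habs := bss_abs_le B hmemdiff n
      rw [← hc] at habs
      have h3 : |u k n - v n| * c ≤ ε * c / 2 := by
        have := hK k hk
        calc |u k n - v n| * c = |(u k - v) n| * c := by rw [Pi.sub_apply]
          _ ≤ B.N (u k - v) := habs
          _ ≤ ε * c / 2 := this
      rw [Real.dist_eq]
      have h4 : |u k n - v n| ≤ ε / 2 := by
        rw [← mul_le_mul_iff_of_pos_right hcpos]
        calc |u k n - v n| * c ≤ ε * c / 2 := h3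
          _ = ε / 2 * c := by ring
      linarith
    exact tendsto_nhds_unique h2 h1
  rw [← hvw]
  refine ⟨hvmem, ?_⟩
  apply le_of_forall_pos_le_add
  intro ε hε
  obtain ⟨K, hK⟩ := hvconv ε hε
  have hmem1 : B.mem (v - u K) := bss_mem_sub B.toBanachSeqSpace hvmem (humem K)
  have h1 : B.N v ≤ B.N (v - u K) + B.N (u K) := by
    have heq : v = (v - u K) + u K := by funext n; simp
    calc B.N v = B.N ((v - u K) + u K) := by rw [← heq]
      _ ≤ B.N (v - u K) + B.N (u K) := B.N_add _ _ hmem1 (humem K)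
  have h2 : B.N (v - u K) ≤ ε := by
    rw [bss_N_sub_comm B.toBanachSeqSpace hvmem (humem K)]
    exact hK K le_rfl
  have h3 : B.N (u K) ≤ (∑' k, r k) * B.N s := by
    refine le_trans (bss_finsum B.toBanachSeqSpace g hgmem _).2 ?_
    have heq : ∑ i ∈ Finset.range K, B.N (g i) = (∑ i ∈ Finset.range K, r i) * B.N s := by
      rw [Finset.sum_mul]
      exact Finset.sum_congr rfl (fun i _ => hgN i)
    rw [heq]
    exact mul_le_mul_of_nonneg_right (Summable.sum_le_tsum _ (fun i _ => hr0 i) hrs) (B.N_nonneg s)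
  linarith


variable [CompleteSpace X]

/-- The Green operator. -/
noncomputable def GreenOp (A : ℤ → X →L[ℝ] X) (pd : PartialDichotomy A) (y : ℤ → X)
    (n : ℤ) : X :=
  (∑' k : ℕ, fcoc A (n - k) k (pd.P1 (n - k) (y (n - k))))
    - ∑' k : ℕ, pd.V n (n + 1 + k) (y (n + 1 + k))

lemma term1_norm (A : ℤ → X →L[ℝ] X) (pd : PartialDichotomy A) (y : ℤ → X) (n : ℤ) (k : ℕ) :
    ‖fcoc A (n - k) k (pd.P1 (n - k) (y (n - k)))‖
      ≤ pd.D * Real.exp (-pd.d * k) * ‖y (n - k)‖ := by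
  have : fcoc A (n - k) k (pd.P1 (n - k) (y (n - k)))
      = ((fcoc A (n - k) k).comp (pd.P1 (n - k))) (y (n - k)) := rfl
  rw [this]
  calc ‖((fcoc A (n - k) k).comp (pd.P1 (n - k))) (y (n - k))‖
      ≤ ‖(fcoc A (n - k) k).comp (pd.P1 (n - k))‖ * ‖y (n - k)‖ :=
        ContinuousLinearMap.le_opNorm _ _
    _ ≤ pd.D * Real.exp (-pd.d * k) * ‖y (n - k)‖ :=
        mul_le_mul_of_nonneg_right (pd.bound1 (n - k) k) (norm_nonneg _)

lemma term2_norm (A : ℤ → X →L[ℝ] X) (pd : PartialDichotomy A) (y : ℤ → X) (n : ℤ) (k : ℕ) :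
    ‖pd.V n (n + 1 + k) (y (n + 1 + k))‖
      ≤ pd.D * Real.exp (-pd.b * (1 + k)) * ‖y (n + 1 + k)‖ := by
  have hb2 := pd.bound2 n (n + 1 + k) (by omega)
  have hcast : ((n + 1 + (k:ℤ) : ℤ) : ℝ) - (n : ℝ) = 1 + (k : ℝ) := by push_cast; ring
  rw [hcast] at hb2
  calc ‖pd.V n (n + 1 + k) (y (n + 1 + k))‖
      ≤ ‖pd.V n (n + 1 + k)‖ * ‖y (n + 1 + k)‖ := ContinuousLinearMap.le_opNorm _ _
    _ ≤ pd.D * Real.exp (-pd.b * (1 + k)) * ‖y (n + 1 + k)‖ :=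
        mul_le_mul_of_nonneg_right hb2 (norm_nonneg _)

lemma summable_r2 (pd : PartialDichotomy (X := X) A) :
    Summable (fun k : ℕ => pd.D * Real.exp (-pd.b * (1 + k))) := by
  apply ((summable_exp_decay pd.hb).mul_left (pd.D * Real.exp (-pd.b))).congr
  intro k
  rw [show -pd.b * (1 + (k:ℝ)) = -pd.b + -pd.b * k by ring, Real.exp_add]
  ring

lemma summable_bound1 (A : ℤ → X →L[ℝ] X) (pd : PartialDichotomy A) (y : ℤ → X) (M : ℝ)
    (hM : ∀ m, ‖y m‖ ≤ M) (n : ℤ) :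
    Summable (fun k : ℕ => pd.D * Real.exp (-pd.d * k) * ‖y (n - k)‖) := by
  apply Summable.of_nonneg_of_le
    (fun k => mul_nonneg (mul_nonneg pd.hD.le (Real.exp_pos _).le) (norm_nonneg _))
    (fun k => mul_le_mul_of_nonneg_left (hM _)
      (mul_nonneg pd.hD.le (Real.exp_pos _).le))
    (((summable_exp_decay pd.hd).mul_left pd.D).mul_right M)

lemma summable_bound2 (A : ℤ → X →L[ℝ] X) (pd : PartialDichotomy A) (y : ℤ → X) (M : ℝ)
    (hM : ∀ m, ‖y m‖ ≤ M) (n : ℤ) :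
    Summable (fun k : ℕ => pd.D * Real.exp (-pd.b * (1 + k)) * ‖y (n + 1 + k)‖) := by
  apply Summable.of_nonneg_of_le
    (fun k => mul_nonneg (mul_nonneg pd.hD.le (Real.exp_pos _).le) (norm_nonneg _))
    (fun k => mul_le_mul_of_nonneg_left (hM _)
      (mul_nonneg pd.hD.le (Real.exp_pos _).le))
    ((summable_r2 pd).mul_right M)

lemma summable_term1 (A : ℤ → X →L[ℝ] X) (pd : PartialDichotomy A) (y : ℤ → X) (M : ℝ)
    (hM : ∀ m, ‖y m‖ ≤ M) (n : ℤ) :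
    Summable (fun k : ℕ => fcoc A (n - k) k (pd.P1 (n - k) (y (n - k)))) :=
  Summable.of_norm_bounded (summable_bound1 A pd y M hM n) (term1_norm A pd y n)

lemma summable_term2 (A : ℤ → X →L[ℝ] X) (pd : PartialDichotomy A) (y : ℤ → X) (M : ℝ)
    (hM : ∀ m, ‖y m‖ ≤ M) (n : ℤ) :
    Summable (fun k : ℕ => pd.V n (n + 1 + k) (y (n + 1 + k))) :=
  Summable.of_norm_bounded (summable_bound2 A pd y M hM n) (term2_norm A pd y n)

lemma green_norm_le (A : ℤ → X →L[ℝ] X) (pd : PartialDichotomy A) (y : ℤ → X) (M : ℝ)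
    (hM : ∀ m, ‖y m‖ ≤ M) (n : ℤ) :
    ‖GreenOp A pd y n‖ ≤ (∑' k : ℕ, pd.D * Real.exp (-pd.d * k) * ‖y (n - k)‖)
      + ∑' k : ℕ, pd.D * Real.exp (-pd.b * (1 + k)) * ‖y (n + 1 + k)‖ := by
  have h1 : ‖∑' k : ℕ, fcoc A (n - k) k (pd.P1 (n - k) (y (n - k)))‖
      ≤ ∑' k : ℕ, pd.D * Real.exp (-pd.d * k) * ‖y (n - k)‖ := by
    refine le_trans (norm_tsum_le_tsum_norm ?_) ?_
    · exact (summable_bound1 A pd y M hM n).of_nonneg_of_le (fun k => norm_nonneg _)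
        (term1_norm A pd y n)
    · exact Summable.tsum_le_tsum (term1_norm A pd y n)
        ((summable_bound1 A pd y M hM n).of_nonneg_of_le (fun k => norm_nonneg _)
          (term1_norm A pd y n))
        (summable_bound1 A pd y M hM n)
  have h2 : ‖∑' k : ℕ, pd.V n (n + 1 + k) (y (n + 1 + k))‖
      ≤ ∑' k : ℕ, pd.D * Real.exp (-pd.b * (1 + k)) * ‖y (n + 1 + k)‖ := by
    refine le_trans (norm_tsum_le_tsum_norm ?_) ?_
    · exact (summable_bound2 A pd y M hM n).of_nonneg_of_le (fun k => norm_nonneg _)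
        (term2_norm A pd y n)
    · exact Summable.tsum_le_tsum (term2_norm A pd y n)
        ((summable_bound2 A pd y M hM n).of_nonneg_of_le (fun k => norm_nonneg _)
          (term2_norm A pd y n))
        (summable_bound2 A pd y M hM n)
  calc ‖GreenOp A pd y n‖
      ≤ ‖∑' k : ℕ, fcoc A (n - k) k (pd.P1 (n - k) (y (n - k)))‖
        + ‖∑' k : ℕ, pd.V n (n + 1 + k) (y (n + 1 + k))‖ := norm_sub_le _ _
    _ ≤ _ := add_le_add h1 h2



lemma y_bound (B : AdmissibleBSS) (y : ℤ → X) (hy : memXB B.toBanachSeqSpace y) (m : ℤ) :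
    ‖y m‖ ≤ NXB B.toBanachSeqSpace y / B.N (fun k => if k = (0:ℤ) then (1:ℝ) else 0) := by
  have := bss_abs_le' B hy m
  rwa [abs_of_nonneg (norm_nonneg _)] at this

/-- `GreenOp` maps `X_B^{s,u}` into itself, with norm bound. -/
lemma green_mem (B : AdmissibleBSS) (A : ℤ → X →L[ℝ] X) (pd : PartialDichotomy A)
    (y : ℤ → X) (hy : memXBsu B.toBanachSeqSpace pd y) :
    memXBsu B.toBanachSeqSpace pd (GreenOp A pd y) ∧
      NXB B.toBanachSeqSpace (GreenOp A pd y)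
        ≤ ((∑' k : ℕ, pd.D * Real.exp (-pd.d * k))
            + ∑' k : ℕ, pd.D * Real.exp (-pd.b * (1 + k))) * NXB B.toBanachSeqSpace y := by
  set s : ℤ → ℝ := fun n => ‖y n‖ with hsdef
  have hsmem : B.mem s := hy.1
  have hs0 : ∀ n, 0 ≤ s n := fun n => norm_nonneg _
  set M : ℝ := NXB B.toBanachSeqSpace y / B.N (fun k => if k = (0:ℤ) then (1:ℝ) else 0)
  have hM : ∀ m, ‖y m‖ ≤ M := y_bound B y hy.1
  set r1 : ℕ → ℝ := fun k => pd.D * Real.exp (-pd.d * k) with hr1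
  set r2 : ℕ → ℝ := fun k => pd.D * Real.exp (-pd.b * (1 + k)) with hr2
  have hr10 : ∀ k, 0 ≤ r1 k := fun k => mul_nonneg pd.hD.le (Real.exp_pos _).le
  have hr20 : ∀ k, 0 ≤ r2 k := fun k => mul_nonneg pd.hD.le (Real.exp_pos _).le
  have hr1s : Summable r1 := (summable_exp_decay pd.hd).mul_left pd.D
  have hr2s : Summable r2 := summable_r2 pd
  obtain ⟨ht1mem, ht1N⟩ := conv_mem B r1 hr10 hr1s (fun k => -(k:ℤ)) s hsmem hs0
  obtain ⟨ht2mem, ht2N⟩ := conv_mem B r2 hr20 hr2s (fun k => 1 + (k:ℤ)) s hsmem hs0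
  set t1 : ℤ → ℝ := fun n => ∑' k, r1 k * s (n + -(k:ℤ)) with ht1
  set t2 : ℤ → ℝ := fun n => ∑' k, r2 k * s (n + (1 + (k:ℤ))) with ht2
  have ht1eq : ∀ n, t1 n = ∑' k : ℕ, pd.D * Real.exp (-pd.d * k) * ‖y (n - k)‖ := by
    intro n
    apply tsum_congr
    intro k
    rw [show n + -(k:ℤ) = n - k by ring]
  have ht2eq : ∀ n, t2 n = ∑' k : ℕ, pd.D * Real.exp (-pd.b * (1 + k)) * ‖y (n + 1 + k)‖ := by
    intro n
    apply tsum_congr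
    intro k
    rw [show n + (1 + (k:ℤ)) = n + 1 + k by ring]
  have ht1nn : ∀ n, 0 ≤ t1 n := fun n =>
    tsum_nonneg (fun k => mul_nonneg (hr10 k) (hs0 _))
  have ht2nn : ∀ n, 0 ≤ t2 n := fun n =>
    tsum_nonneg (fun k => mul_nonneg (hr20 k) (hs0 _))
  have hGle : ∀ n, ‖GreenOp A pd y n‖ ≤ t1 n + t2 n := by
    intro n
    rw [ht1eq n, ht2eq n]
    exact green_norm_le A pd y M hM n
  have hsolid := B.solid (fun n => ‖GreenOp A pd y n‖) (t1 + t2)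
    (B.add_mem _ _ ht1mem ht2mem)
    (by
      intro n
      rw [abs_of_nonneg (norm_nonneg _), Pi.add_apply,
        abs_of_nonneg (add_nonneg (ht1nn n) (ht2nn n))]
      exact hGle n)
  have hNbound : NXB B.toBanachSeqSpace (GreenOp A pd y)
      ≤ ((∑' k, r1 k) + ∑' k, r2 k) * NXB B.toBanachSeqSpace y := by
    refine le_trans hsolid.2 ?_
    refine le_trans (B.N_add _ _ ht1mem ht2mem) ?_
    rw [add_mul]
    exact add_le_add ht1N ht2N
  -- splitting property
  have hsplit : ∀ n : ℤ, GreenOp A pd y n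
      = pd.P1 n (GreenOp A pd y n) + pd.P2 n (GreenOp A pd y n) := by
    intro n
    set a : X := ∑' k : ℕ, fcoc A (n - k) k (pd.P1 (n - k) (y (n - k))) with hadef
    set bb : X := ∑' k : ℕ, pd.V n (n + 1 + k) (y (n + 1 + k)) with hbdef
    have hsum1 := summable_term1 A pd y M hM n
    have hsum2 := summable_term2 A pd y M hM n
    have e2 : ∀ z, pd.P1 n (pd.P1 n z) = pd.P1 n z := fun z => by
      have := DFunLike.congr_fun (pd.proj1 n) z
      simpa using this
    have f2 : ∀ z, pd.P2 n (pd.P2 n z) = pd.P2 n z := fun z => by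
      have := DFunLike.congr_fun (pd.proj2 n) z
      simpa using this
    have ha : pd.P1 n a = a := by
      rw [hadef, (pd.P1 n).map_tsum hsum1]
      apply tsum_congr
      intro k
      have hc := DFunLike.congr_fun (fcoc_comm1 A pd (n - k) k) (y (n - k))
      simp only [ContinuousLinearMap.comp_apply] at hc
      rw [show (n - (k:ℤ)) + (k:ℤ) = n by ring] at hc
      rw [hc, e2, ← hc]
    have hbb : pd.P2 n bb = bb := by
      rw [hbdef, (pd.P2 n).map_tsum hsum2]
      apply tsum_congr
      intro k
      have hr := DFunLike.congr_fun (pd.V_range n (n + 1 + k) (by omega)) (y (n + 1 + k))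
      simp only [ContinuousLinearMap.comp_apply] at hr
      rw [← hr, f2, hr]
    have h12 : pd.P1 n bb = 0 := by
      rw [← hbb]
      exact (proj_orth A pd n bb).1
    have h21 : pd.P2 n a = 0 := by
      rw [← ha]
      exact (proj_orth A pd n a).2
    show a - bb = pd.P1 n (a - bb) + pd.P2 n (a - bb)
    rw [map_sub, map_sub, ha, h12, h21, hbb]
    abel
  exact ⟨⟨hsolid.1, hsplit⟩, by
    rw [hr1, hr2] at hNbound
    exact hNbound⟩



/-- summability of the shifted unstable series -/
lemma summable_term2' (A : ℤ → X →L[ℝ] X) (pd : PartialDichotomy A) (y : ℤ → X) (M : ℝ)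
    (hM : ∀ m, ‖y m‖ ≤ M) (n : ℤ) :
    Summable (fun k : ℕ => pd.V n (n + k) (y (n + k))) := by
  apply Summable.of_norm_bounded (g := fun k : ℕ => pd.D * Real.exp (-pd.b * k) * M)
  · exact ((summable_exp_decay pd.hb).mul_left pd.D).mul_right M
  · intro k
    have hb2 := pd.bound2 n (n + k) (by omega)
    have hcast : ((n + (k:ℤ) : ℤ) : ℝ) - (n : ℝ) = (k : ℝ) := by push_cast; ring
    rw [hcast] at hb2
    calc ‖pd.V n (n + k) (y (n + k))‖ ≤ ‖pd.V n (n + k)‖ * ‖y (n + k)‖ :=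
          ContinuousLinearMap.le_opNorm _ _
      _ ≤ pd.D * Real.exp (-pd.b * k) * M :=
          mul_le_mul hb2 (hM _) (norm_nonneg _)
            (mul_nonneg pd.hD.le (Real.exp_pos _).le)

/-- the Green operator solves the inhomogeneous equation -/
lemma green_rec (A : ℤ → X →L[ℝ] X) (pd : PartialDichotomy A) (y : ℤ → X) (M : ℝ)
    (hM : ∀ m, ‖y m‖ ≤ M) (hy2 : ∀ n : ℤ, y n = pd.P1 n (y n) + pd.P2 n (y n)) (n : ℤ) :
    GreenOp A pd y n - A (n-1) (GreenOp A pd y (n-1)) = y n := by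
  set S1 : ℤ → X := fun m => ∑' k : ℕ, fcoc A (m - k) k (pd.P1 (m - k) (y (m - k))) with hS1
  set S2 : ℤ → X := fun m => ∑' k : ℕ, pd.V m (m + 1 + k) (y (m + 1 + k)) with hS2
  set T : X := ∑' k : ℕ, fcoc A (n - 1 - k) (k + 1) (pd.P1 (n - 1 - k) (y (n - 1 - k))) with hT
  have h1 : A (n-1) (S1 (n-1)) = T := by
    rw [hS1, (A (n-1)).map_tsum (summable_term1 A pd y M hM (n-1))]
    apply tsum_congr
    intro k
    have heq : fcoc A (n - 1 - k) (k + 1) (pd.P1 (n - 1 - k) (y (n - 1 - k)))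
        = A ((n - 1 - k) + k) (fcoc A (n - 1 - k) k (pd.P1 (n - 1 - k) (y (n - 1 - k)))) := rfl
    rw [heq, show (n - 1 - (k:ℤ)) + (k:ℤ) = n - 1 by ring]
  have h2 : S1 n = pd.P1 n (y n) + T := by
    simp only [hS1]
    rw [Summable.tsum_eq_zero_add (summable_term1 A pd y M hM n)]
    congr 1
    · simp [fcoc]
    · rw [hT]
      apply tsum_congr
      intro k
      have hc : n - ((k:ℕ)+1 : ℕ) = n - 1 - (k:ℤ) := by push_cast; ring
      rw [hc]
  have h3 : A (n-1) (S2 (n-1)) = pd.P2 n (y n) + S2 n := by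
    rw [hS2, (A (n-1)).map_tsum (summable_term2 A pd y M hM (n-1))]
    have hstep : (fun k : ℕ => A (n-1) (pd.V (n-1) ((n-1) + 1 + k) (y ((n-1) + 1 + k))))
        = fun k : ℕ => pd.V n (n + k) (y (n + k)) := by
      funext k
      have hsh := V_shift A pd n ((n-1) + 1 + k) (by omega) (y ((n-1) + 1 + k))
      rw [show (n-1) + 1 + (k:ℤ) = n + k by ring] at hsh ⊢
      exact hsh
    rw [hstep, Summable.tsum_eq_zero_add (summable_term2' A pd y M hM n)]
    congr 1
    · have h0 : n + ((0:ℕ):ℤ) = n := by simp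
      rw [h0, pd.V_self]
    · apply tsum_congr
      intro k
      rw [show n + ((k:ℕ)+1 : ℕ) = n + 1 + (k:ℤ) by push_cast; ring]
  have hG : GreenOp A pd y n = S1 n - S2 n := rfl
  have hG' : GreenOp A pd y (n-1) = S1 (n-1) - S2 (n-1) := rfl
  rw [hG, hG', map_sub, h1, h3, h2]
  have := hy2 n
  linear_combination (norm := module) this.symm



lemma green_add (A : ℤ → X →L[ℝ] X) (pd : PartialDichotomy A) (y z : ℤ → X) (My Mz : ℝ)
    (hMy : ∀ m, ‖y m‖ ≤ My) (hMz : ∀ m, ‖z m‖ ≤ Mz) :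
    GreenOp A pd (y + z) = GreenOp A pd y + GreenOp A pd z := by
  funext n
  show GreenOp A pd (y + z) n = GreenOp A pd y n + GreenOp A pd z n
  simp only [GreenOp]
  have h1 : (∑' k : ℕ, fcoc A (n - k) k (pd.P1 (n - k) ((y + z) (n - k))))
      = (∑' k : ℕ, fcoc A (n - k) k (pd.P1 (n - k) (y (n - k))))
        + ∑' k : ℕ, fcoc A (n - k) k (pd.P1 (n - k) (z (n - k))) := by
    rw [← Summable.tsum_add (summable_term1 A pd y My hMy n) (summable_term1 A pd z Mz hMz n)]
    apply tsum_congr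
    intro k
    simp [Pi.add_apply, map_add]
  have h2 : (∑' k : ℕ, pd.V n (n + 1 + k) ((y + z) (n + 1 + k)))
      = (∑' k : ℕ, pd.V n (n + 1 + k) (y (n + 1 + k)))
        + ∑' k : ℕ, pd.V n (n + 1 + k) (z (n + 1 + k)) := by
    rw [← Summable.tsum_add (summable_term2 A pd y My hMy n) (summable_term2 A pd z Mz hMz n)]
    apply tsum_congr
    intro k
    simp [Pi.add_apply, map_add]
  rw [h1, h2]
  abel

lemma green_smul (A : ℤ → X →L[ℝ] X) (pd : PartialDichotomy A) (a : ℝ) (y : ℤ → X) :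
    GreenOp A pd (a • y) = a • GreenOp A pd y := by
  funext n
  show GreenOp A pd (a • y) n = a • GreenOp A pd y n
  simp only [GreenOp]
  have h1 : (∑' k : ℕ, fcoc A (n - k) k (pd.P1 (n - k) ((a • y) (n - k))))
      = a • ∑' k : ℕ, fcoc A (n - k) k (pd.P1 (n - k) (y (n - k))) := by
    rw [← tsum_const_smul'' a]
    apply tsum_congr
    intro k
    simp [Pi.smul_apply, map_smul]
  have h2 : (∑' k : ℕ, pd.V n (n + 1 + k) ((a • y) (n + 1 + k)))
      = a • ∑' k : ℕ, pd.V n (n + 1 + k) (y (n + 1 + k)) := by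
    rw [← tsum_const_smul'' a]
    apply tsum_congr
    intro k
    simp [Pi.smul_apply, map_smul]
  rw [h1, h2, smul_sub]


end GreenAux

/- STATEMENT 7: there is a bounded linear operator 𝔸 : X_B^{s,u} → X_B^{s,u} given by
(𝔸 y)_n = ∑_{m ≤ n} 𝒜(n,m)P_m^1 y_m − ∑_{m > n} 𝒜(n,m)P_m^2 y_m, and for
x, y ∈ X_B^{s,u} one has 𝔸 y = x iff x_n − A_{n−1} x_{n−1} = y_n for all n. -/
theorem green_operator_exists (X : Type*) [NormedAddCommGroup X] [NormedSpace ℝ X]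
    [CompleteSpace X] (B : AdmissibleBSS) (A : ℤ → X →L[ℝ] X)
    (pd : PartialDichotomy A) :
    ∃ (𝔸 : (ℤ → X) → (ℤ → X)) (C : ℝ),
      -- 𝔸 maps X_B^{s,u} into itself
      (∀ y, memXBsu B.toBanachSeqSpace pd y → memXBsu B.toBanachSeqSpace pd (𝔸 y)) ∧
      -- 𝔸 is linear on X_B^{s,u}
      (∀ y z, memXBsu B.toBanachSeqSpace pd y → memXBsu B.toBanachSeqSpace pd z →
        𝔸 (y + z) = 𝔸 y + 𝔸 z) ∧
      (∀ (a : ℝ) (y), memXBsu B.toBanachSeqSpace pd y → 𝔸 (a • y) = a • 𝔸 y) ∧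
      -- 𝔸 is bounded
      (∀ y, memXBsu B.toBanachSeqSpace pd y →
        NXB B.toBanachSeqSpace (𝔸 y) ≤ C * NXB B.toBanachSeqSpace y) ∧
      -- the explicit formula for 𝔸
      (∀ y, memXBsu B.toBanachSeqSpace pd y → ∀ n : ℤ,
        𝔸 y n = (∑' k : ℕ, fcoc A (n - k) k (pd.P1 (n - k) (y (n - k))))
          - ∑' k : ℕ, pd.V n (n + 1 + k) (y (n + 1 + k))) ∧
      -- characterization: 𝔸 y = x iff x_n − A_{n−1} x_{n−1} = y_n for all n
      (∀ x y, memXBsu B.toBanachSeqSpace pd x → memXBsu B.toBanachSeqSpace pd y →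
        (𝔸 y = x ↔ ∀ n : ℤ, x n - A (n - 1) (x (n - 1)) = y n)) := by
  classical
  refine ⟨GreenAux.GreenOp A pd,
    (∑' k : ℕ, pd.D * Real.exp (-pd.d * k)) + ∑' k : ℕ, pd.D * Real.exp (-pd.b * (1 + k)),
    ?_, ?_, ?_, ?_, ?_, ?_⟩
  · intro y hy
    exact (GreenAux.green_mem B A pd y hy).1
  · intro y z hy hz
    exact GreenAux.green_add A pd y z _ _ (GreenAux.y_bound B y hy.1) (GreenAux.y_bound B z hz.1)
  · intro a y _
    exact GreenAux.green_smul A pd a y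
  · intro y hy
    exact (GreenAux.green_mem B A pd y hy).2
  · intro y _ n
    rfl
  · intro x y hx hy
    constructor
    · intro hGx n
      rw [← hGx]
      exact GreenAux.green_rec A pd y _ (GreenAux.y_bound B y hy.1) hy.2 n
    · intro hrec
      set z : ℤ → X := GreenAux.GreenOp A pd y with hz
      have hzmem := (GreenAux.green_mem B A pd y hy).1
      have hzrec : ∀ n : ℤ, z n - A (n-1) (z (n-1)) = y n :=
        fun n => GreenAux.green_rec A pd y _ (GreenAux.y_bound B y hy.1) hy.2 n
      set w : ℤ → X := fun n => z n - x n with hw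
      have hwrec : ∀ j : ℤ, w j = A (j-1) (w (j-1)) := by
        intro j
        simp only [hw]
        rw [map_sub]
        have h3 : z j - A (j-1) (z (j-1)) = x j - A (j-1) (x (j-1)) := by
          rw [hzrec j, hrec j]
        linear_combination (norm := module) h3
      have hwsplit : ∀ j : ℤ, w j = pd.P1 j (w j) + pd.P2 j (w j) := by
        intro j
        simp only [hw]
        rw [map_sub, map_sub]
        have h1 := hzmem.2 j
        have h2 := hx.2 j
        linear_combination (norm := module) h1 - h2
      have hwM : ∀ j : ℤ, ‖w j‖ ≤ NXB B.toBanachSeqSpace z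
            / B.N (fun k => if k = (0:ℤ) then (1:ℝ) else 0)
          + NXB B.toBanachSeqSpace x / B.N (fun k => if k = (0:ℤ) then (1:ℝ) else 0) := by
        intro j
        simp only [hw]
        exact le_trans (norm_sub_le _ _)
          (add_le_add (GreenAux.y_bound B z hzmem.1 j) (GreenAux.y_bound B x hx.1 j))
      have hzero := GreenAux.sol_zero A pd w _ hwM hwrec hwsplit
      funext n
      have h0 := hzero n
      simp only [hw] at h0
      exact sub_eq_zero.mp h0
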